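/- arXiv:2101.05841 — 4 statements merged into one kernel-verified Lean document; each statement's English description precedes it below -/
import Mathlib

section
/- Let X = (X_1,...,X_d) have independent standard normal coordinates. Then the variance of ‖X‖ is at most 1, for every dimension d ≥ 1. -/
open MeasureTheory ProbabilityTheory Real Set
open scoped ENNReal NNReal

namespace VarNormGaussAux

noncomputable def gpi (d : ℕ) : Measure (Fin d → ℝ) := Measure.pi fun _ => gaussianReal 0 1

instance (d : ℕ) : IsProbabilityMeasure (gpi d) := by
  unfold gpi; infer_instance

/-- The joint law of independent standard gaussians is the product gaussian measure. -/
lemma map_eq_gpi {Ω : Type*} [MeasurableSpace Ω] (μ : Measure Ω) [IsProbabilityMeasure μ]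
    (d : ℕ) (X : Fin d → Ω → ℝ) (hmeas : ∀ i, Measurable (X i))
    (hindep : iIndepFun X μ)
    (hdist : ∀ i, μ.map (X i) = gaussianReal 0 1) :
    μ.map (fun ω i => X i ω) = gpi d := by
  symm
  refine Measure.pi_eq fun s hs => ?_
  rw [Measure.map_apply (measurable_pi_lambda _ fun i => hmeas i) (MeasurableSet.univ_pi hs)]
  have hpre : (fun ω i => X i ω) ⁻¹' (Set.pi Set.univ s) = ⋂ i, X i ⁻¹' s i := by
    ext ω; simp [Set.mem_univ_pi]
  rw [hpre, hindep.meas_iInter (fun i => ⟨s i, hs i, rfl⟩)]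
  exact Finset.prod_congr rfl fun i _ => by
    rw [← hdist i, Measure.map_apply (hmeas i) (hs i)]

lemma gaussianPDFReal_eq (x : ℝ) :
    gaussianPDFReal 0 1 x = (Real.sqrt (2 * π))⁻¹ * Real.exp (-x ^ 2 / 2) := by
  simp [gaussianPDFReal]

/-- The product gaussian measure has the explicit product density. -/
lemma gpi_eq_withDensity (d : ℕ) :
    gpi d = (volume : Measure (Fin d → ℝ)).withDensity
      (fun x => ENNReal.ofReal (∏ i, gaussianPDFReal 0 1 (x i))) := by
  refine Measure.pi_eq fun s hs => ?_
  rw [withDensity_apply _ (MeasurableSet.univ_pi hs)]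
  rw [← ofReal_integral_eq_lintegral_ofReal
    ((show Integrable (fun x : Fin d → ℝ => ∏ i, gaussianPDFReal 0 1 (x i)) volume from
      Integrable.fintype_prod (f := fun _ => gaussianPDFReal 0 1)
      (fun _ => integrable_gaussianPDFReal 0 1)).restrict)
    (ae_of_all _ fun x => Finset.prod_nonneg fun i _ => gaussianPDFReal_nonneg 0 1 (x i))]
  have h1 : ∫ x in Set.pi Set.univ s, ∏ i, gaussianPDFReal 0 1 (x i)
      = ∫ x : Fin d → ℝ, ∏ i, (s i).indicator (gaussianPDFReal 0 1) (x i) := by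
    rw [← integral_indicator (MeasurableSet.univ_pi hs)]
    congr 1
    ext x
    by_cases hx : x ∈ Set.pi Set.univ s
    · rw [Set.indicator_of_mem hx]
      exact Finset.prod_congr rfl fun i _ =>
        (Set.indicator_of_mem (hx i (Set.mem_univ i)) _).symm
    · rw [Set.indicator_of_notMem hx]
      rw [Set.mem_univ_pi] at hx
      push_neg at hx
      obtain ⟨i, hi⟩ := hx
      exact (Finset.prod_eq_zero (Finset.mem_univ i)
        (by rw [Set.indicator_of_notMem hi])).symm
  rw [h1, volume_pi, integral_fintype_prod_eq_prod (f := fun i => (s i).indicator (gaussianPDFReal 0 1))]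
  have h2 : ∀ i : Fin d, ∫ x, (s i).indicator (gaussianPDFReal 0 1) x
      = ∫ x in s i, gaussianPDFReal 0 1 x := fun i => integral_indicator (hs i)
  simp_rw [h2]
  rw [ENNReal.ofReal_prod_of_nonneg
    (fun i _ => setIntegral_nonneg (hs i) fun x _ => gaussianPDFReal_nonneg 0 1 x)]
  exact Finset.prod_congr rfl fun i _ =>
    (gaussianReal_apply_eq_integral 0 one_ne_zero (s i)).symm


noncomputable def Cd (d : ℕ) : ℝ :=
  (d : ℝ) * (volume (Metric.ball (0 : EuclideanSpace ℝ (Fin d)) 1)).toReal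
    * ((Real.sqrt (2 * π))⁻¹) ^ d

lemma integral_gpi_norm (d : ℕ) (hd : 1 ≤ d) (g : ℝ → ℝ) :
    ∫ x, g (Real.sqrt (∑ i, (x i) ^ 2)) ∂(gpi d)
      = Cd d * ∫ y in Ioi (0:ℝ), y ^ (d - 1) * (g y * Real.exp (-y ^ 2 / 2)) := by
  haveI : Nonempty (Fin d) := Fin.pos_iff_nonempty.mp hd
  set F : ℝ → ℝ := fun y => ((Real.sqrt (2 * π))⁻¹ ^ d * Real.exp (-y ^ 2 / 2)) * g y with hF
  have hmeasP : Measurable fun x : Fin d → ℝ => (∏ i, gaussianPDFReal 0 1 (x i)) :=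
    Finset.measurable_prod _ fun i _ =>
      (measurable_gaussianPDFReal 0 1).comp (measurable_pi_apply i)
  have step1 : ∫ x, g (Real.sqrt (∑ i, (x i) ^ 2)) ∂(gpi d)
      = ∫ x : Fin d → ℝ, F (Real.sqrt (∑ i, (x i) ^ 2)) := by
    rw [gpi_eq_withDensity d]
    have hco : (fun x : Fin d → ℝ => ENNReal.ofReal (∏ i, gaussianPDFReal 0 1 (x i)))
        = fun x => ((Real.toNNReal (∏ i, gaussianPDFReal 0 1 (x i)) : ℝ≥0) : ℝ≥0∞) := rfl
    rw [hco, integral_withDensity_eq_integral_smul hmeasP.real_toNNReal]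
    congr 1
    ext x
    have hnn : (0:ℝ) ≤ ∏ i, gaussianPDFReal 0 1 (x i) :=
      Finset.prod_nonneg fun i _ => gaussianPDFReal_nonneg 0 1 (x i)
    have hsum : (0:ℝ) ≤ ∑ i, (x i) ^ 2 := Finset.sum_nonneg fun i _ => sq_nonneg _
    have hprod : ∏ i, gaussianPDFReal 0 1 (x i)
        = (Real.sqrt (2 * π))⁻¹ ^ d * Real.exp (-(Real.sqrt (∑ i, (x i) ^ 2)) ^ 2 / 2) := by
      simp_rw [gaussianPDFReal_eq, Finset.prod_mul_distrib, Finset.prod_const,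
        Finset.card_univ, Fintype.card_fin, ← Real.exp_sum, Real.sq_sqrt hsum]
      congr 1
      rw [← Finset.sum_div, ← Finset.sum_neg_distrib]
    rw [NNReal.smul_def, Real.coe_toNNReal _ hnn, hF]
    rw [hprod, smul_eq_mul]
  have step2 : ∫ x : Fin d → ℝ, F (Real.sqrt (∑ i, (x i) ^ 2))
      = ∫ y : EuclideanSpace ℝ (Fin d), F ‖y‖ := by
    rw [← (EuclideanSpace.volume_preserving_symm_measurableEquiv_toLp (Fin d)).integral_comp
      (MeasurableEquiv.measurableEmbedding _) (fun x : Fin d → ℝ => F (Real.sqrt (∑ i, (x i) ^ 2)))]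
    congr 1
    ext y
    congr 1
    rw [EuclideanSpace.norm_eq]
    congr 1
    exact Finset.sum_congr rfl fun i _ => by
      simp [Real.norm_eq_abs, sq_abs]
  have step3 : ∫ y : EuclideanSpace ℝ (Fin d), F ‖y‖
      = (d : ℝ) * ((volume (Metric.ball (0 : EuclideanSpace ℝ (Fin d)) 1)).toReal
        * ∫ y in Ioi (0:ℝ), y ^ (d - 1) * F y) := by
    haveI : Nontrivial (EuclideanSpace ℝ (Fin d)) := by
      refine nontrivial_of_ne (EuclideanSpace.single ⟨0, hd⟩ 1) 0 ?_
      intro h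
      have := congrArg (fun v : EuclideanSpace ℝ (Fin d) => v ⟨0, hd⟩) h
      simp [EuclideanSpace.single] at this
    rw [integral_fun_norm_addHaar (volume : Measure (EuclideanSpace ℝ (Fin d))) F]
    simp only [finrank_euclideanSpace_fin, nsmul_eq_mul, smul_eq_mul, measureReal_def]
  rw [step1, step2, step3, Cd]
  have : ∫ y in Ioi (0:ℝ), y ^ (d - 1) * F y
      = (Real.sqrt (2 * π))⁻¹ ^ d
        * ∫ y in Ioi (0:ℝ), y ^ (d - 1) * (g y * Real.exp (-y ^ 2 / 2)) := by
    rw [← integral_const_mul]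
    exact setIntegral_congr_fun measurableSet_Ioi fun y _ => by rw [hF]; ring
  rw [this]; ring


noncomputable def Igs (q : ℕ) : ℝ := ∫ y in Ioi (0:ℝ), y ^ q * Real.exp (-y ^ 2 / 2)

lemma Igs_eq (q : ℕ) :
    Igs q = ((1:ℝ)/2) ^ (-(((q:ℝ) + 1)) / 2) * (1/2) * Real.Gamma (((q:ℝ) + 1) / 2) := by
  rw [Igs, ← integral_rpow_mul_exp_neg_mul_rpow (p := 2) (q := (q:ℝ)) two_pos
    (lt_of_lt_of_le neg_one_lt_zero (Nat.cast_nonneg q)) one_half_pos]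
  refine setIntegral_congr_fun measurableSet_Ioi fun y hy => ?_
  rw [Real.rpow_natCast]
  congr 1
  rw [show ((2:ℝ)) = ((2:ℕ):ℝ) by norm_num, Real.rpow_natCast]
  ring

lemma Igs_pos (q : ℕ) : 0 < Igs q := by
  rw [Igs_eq]
  have h : (0:ℝ) < ((q:ℝ) + 1) / 2 := by positivity
  have := Real.Gamma_pos_of_pos h
  positivity

lemma Igs_step (q : ℕ) : Igs (q + 2) = ((q:ℝ) + 1) * Igs q := by
  rw [Igs_eq, Igs_eq]
  have hx : (0:ℝ) < ((q:ℝ) + 1) / 2 := by positivity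
  have hcast : ((((q:ℕ) + 2 : ℕ)):ℝ) = (q:ℝ) + 2 := by push_cast; ring
  rw [hcast]
  have h1 : ((q:ℝ) + 2 + 1) / 2 = ((q:ℝ) + 1) / 2 + 1 := by ring
  rw [h1, Real.Gamma_add_one (ne_of_gt hx)]
  have h2 : (-((q:ℝ) + 2 + 1)) / 2 = (-((q:ℝ) + 1)) / 2 + (-1) := by ring
  rw [h2, Real.rpow_add one_half_pos, Real.rpow_neg_one]
  ring

lemma gamma_sq_le {x : ℝ} (hx : 0 < x) :
    Real.Gamma (x + 1/2) ^ 2 ≤ Real.Gamma x * Real.Gamma (x + 1) := by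
  have hx1 : (0:ℝ) < x + 1 := by linarith
  have hmid := Real.convexOn_log_Gamma.2 (mem_Ioi.mpr hx) (mem_Ioi.mpr hx1)
    (by norm_num : (0:ℝ) ≤ 1/2) (by norm_num : (0:ℝ) ≤ 1/2) (by norm_num)
  have hmid' : Real.log (Real.Gamma (x + 1/2))
      ≤ 1/2 * Real.log (Real.Gamma x) + 1/2 * Real.log (Real.Gamma (x + 1)) := by
    have harg : (2⁻¹ : ℝ) * x + 2⁻¹ * (x + 1) = x + 2⁻¹ := by ring
    simpa [Function.comp, smul_eq_mul, harg, one_div] using hmid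
  have hpos := Real.Gamma_pos_of_pos (by linarith : (0:ℝ) < x + 1/2)
  calc Real.Gamma (x + 1/2) ^ 2
      = Real.exp (Real.log (Real.Gamma (x + 1/2))) ^ 2 := by rw [Real.exp_log hpos]
    _ ≤ Real.exp (1/2 * Real.log (Real.Gamma x) + 1/2 * Real.log (Real.Gamma (x + 1))) ^ 2 := by
        have := Real.exp_le_exp.mpr hmid'
        exact pow_le_pow_left₀ (le_of_lt (Real.exp_pos _)) this 2
    _ = Real.exp (Real.log (Real.Gamma x) + Real.log (Real.Gamma (x + 1))) := by
        rw [← Real.exp_nat_mul]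
        congr 1
        push_cast
        ring
    _ = Real.Gamma x * Real.Gamma (x + 1) := by
        rw [Real.exp_add, Real.exp_log (Real.Gamma_pos_of_pos hx),
          Real.exp_log (Real.Gamma_pos_of_pos hx1)]

lemma Igs_sq_ineq (k : ℕ) : (k:ℝ) * Igs k ^ 2 ≤ Igs (k + 1) ^ 2 := by
  rcases Nat.eq_zero_or_pos k with hk | hk
  · subst hk
    simp only [Nat.cast_zero, zero_mul]
    exact sq_nonneg _
  have hx : (0:ℝ) < (k:ℝ) / 2 := by positivity
  set x : ℝ := (k:ℝ) / 2 with hxdef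
  have hgam := gamma_sq_le hx
  rw [Igs_eq, Igs_eq]
  have hc1 : (((k:ℕ) + 1 : ℕ) : ℝ) = (k:ℝ) + 1 := by push_cast; ring
  rw [hc1]
  have e1 : ((k:ℝ) + 1 + 1) / 2 = x + 1 := by rw [hxdef]; ring
  have e2 : ((k:ℝ) + 1) / 2 = x + 1/2 := by rw [hxdef]; ring
  have e3 : (-((k:ℝ) + 1 + 1)) / 2 = -(x + 1/2) + (-1/2) := by rw [hxdef]; ring
  have e4 : (-((k:ℝ) + 1)) / 2 = -(x + 1/2) := by rw [hxdef]; ring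
  rw [e1, e2, e3, e4]
  have hGx := Real.Gamma_pos_of_pos hx
  have hG1 := Real.Gamma_pos_of_pos (by linarith : (0:ℝ) < x + 1)
  have hrw : Real.Gamma (x + 1) = x * Real.Gamma x := Real.Gamma_add_one (ne_of_gt hx)
  have hpow : ((1:ℝ)/2) ^ (-(x + 1/2) + (-1/2) : ℝ)
      = ((1:ℝ)/2) ^ (-(x + 1/2) : ℝ) * ((1:ℝ)/2) ^ ((-1:ℝ)/2) := by
    rw [← Real.rpow_add one_half_pos]
  rw [hpow]
  set P : ℝ := ((1:ℝ)/2) ^ (-(x + 1/2) : ℝ) with hP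
  have hPpos : 0 < P := Real.rpow_pos_of_pos one_half_pos _
  set Q : ℝ := ((1:ℝ)/2) ^ ((-1:ℝ)/2) with hQ
  have hQsq : Q ^ 2 = 2 := by
    rw [hQ, ← Real.rpow_natCast (((1:ℝ)/2) ^ ((-1:ℝ)/2)) 2, ← Real.rpow_mul (by norm_num)]
    norm_num
  have hk2 : (k:ℝ) = 2 * x := by rw [hxdef]; ring
  have expand : (k:ℝ) * (P * (1/2) * Real.Gamma (x + 1/2)) ^ 2
      = P ^ 2 * (1/2) * (x * Real.Gamma (x + 1/2) ^ 2) := by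
    rw [hk2]; ring
  have expand2 : (P * Q * (1/2) * Real.Gamma (x + 1)) ^ 2
      = P ^ 2 * (1/2) * Real.Gamma (x + 1) ^ 2 := by
    have : (P * Q * (1/2) * Real.Gamma (x + 1)) ^ 2
        = P ^ 2 * Q ^ 2 * (1/4) * Real.Gamma (x + 1) ^ 2 := by ring
    rw [this, hQsq]; ring
  rw [expand, expand2]
  have key : x * Real.Gamma (x + 1/2) ^ 2 ≤ Real.Gamma (x + 1) ^ 2 := by
    calc x * Real.Gamma (x + 1/2) ^ 2 ≤ x * (Real.Gamma x * Real.Gamma (x + 1)) :=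
          mul_le_mul_of_nonneg_left hgam (le_of_lt hx)
      _ = Real.Gamma (x + 1) ^ 2 := by rw [hrw]; ring
  have hP2 : (0:ℝ) ≤ P ^ 2 * (1/2) := by positivity
  exact mul_le_mul_of_nonneg_left key hP2


lemma integrable_sq_gaussian : Integrable (fun x : ℝ => x ^ 2) (gaussianReal 0 1) := by
  rw [gaussianReal_of_var_ne_zero 0 one_ne_zero,
    integrable_withDensity_iff (measurable_gaussianPDF 0 1)
      (ae_of_all _ fun x => ENNReal.ofReal_lt_top)]
  have h0 : Integrable (fun x : ℝ => x ^ (2:ℝ) * Real.exp (-(1/2) * x ^ 2)) volume :=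
    integrable_rpow_mul_exp_neg_mul_sq one_half_pos (by norm_num)
  have h1 := (h0.const_mul ((Real.sqrt (2 * π))⁻¹))
  refine h1.congr (ae_of_all _ fun x => ?_)
  show (√(2 * π))⁻¹ * (x ^ (2:ℝ) * Real.exp (-(1/2) * x ^ 2)) = x ^ 2 * (gaussianPDF 0 1 x).toReal
  rw [show gaussianPDF 0 1 x = ENNReal.ofReal (gaussianPDFReal 0 1 x) from rfl,
    ENNReal.toReal_ofReal (gaussianPDFReal_nonneg 0 1 x), gaussianPDFReal_eq]
  rw [show x ^ (2:ℝ) = x ^ (2:ℕ) from by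
    rw [show ((2:ℝ)) = ((2:ℕ):ℝ) by norm_num, Real.rpow_natCast]]
  push_cast
  ring_nf

end VarNormGaussAux

open MeasureTheory ProbabilityTheory

theorem variance_norm_gaussian_le_one {Ω : Type*} [MeasurableSpace Ω]
    (μ : Measure Ω) [IsProbabilityMeasure μ] (d : ℕ) (hd : 1 ≤ d) (X : Fin d → Ω → ℝ)
    (hmeas : ∀ i, Measurable (X i))
    (hindep : iIndepFun X μ)
    (hdist : ∀ i, μ.map (X i) = gaussianReal 0 1) :
    variance (fun ω => Real.sqrt (∑ i, (X i ω) ^ 2)) μ ≤ 1 := by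
  open VarNormGaussAux Set in
  obtain ⟨k, rfl⟩ : ∃ k, d = k + 1 := ⟨d - 1, (Nat.succ_pred_eq_of_pos hd).symm⟩
  have hT : Measurable fun ω (i : Fin (k+1)) => X i ω := measurable_pi_lambda _ hmeas
  have hmap := map_eq_gpi μ (k+1) X hmeas hindep hdist
  have hSmeas : Measurable fun x : Fin (k+1) → ℝ => ∑ i, (x i) ^ 2 :=
    Finset.measurable_sum Finset.univ fun i _ => (measurable_pi_apply i).pow_const 2
  have hNmeas : Measurable fun x : Fin (k+1) → ℝ => Real.sqrt (∑ i, (x i) ^ 2) :=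
    Real.continuous_sqrt.measurable.comp hSmeas
  -- integrability of the squares
  have hXi2 : ∀ i, Integrable (fun ω => (X i ω) ^ 2) μ := by
    intro i
    have h := integrable_sq_gaussian
    rw [← hdist i] at h
    exact (integrable_map_measure
      ((measurable_id.pow_const 2).aestronglyMeasurable :
        AEStronglyMeasurable (fun x : ℝ => x ^ 2) _)
      (hmeas i).aemeasurable).mp h
  have hS : Integrable (fun ω => ∑ i, (X i ω) ^ 2) μ :=
    integrable_finset_sum _ fun i _ => hXi2 i
  have hf2 : ∀ ω, (Real.sqrt (∑ i, (X i ω) ^ 2)) ^ 2 = ∑ i, (X i ω) ^ 2 := fun ω =>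
    Real.sq_sqrt (Finset.sum_nonneg fun i _ => sq_nonneg _)
  have hfmem : MemLp (fun ω => Real.sqrt (∑ i, (X i ω) ^ 2)) 2 μ := by
    rw [memLp_two_iff_integrable_sq
      (by exact (hNmeas.comp hT).aestronglyMeasurable)]
    exact hS.congr (ae_of_all _ fun ω => (hf2 ω).symm)
  rw [variance_eq_sub hfmem]
  -- the three polar integrals
  have hd1 : (k + 1) - 1 = k := rfl
  have key1 : Cd (k+1) * Igs k = 1 := by
    have h := integral_gpi_norm (k+1) (Nat.le_add_left 1 k) (fun _ => 1)
    rw [integral_const, probReal_univ] at h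
    simp only [ENNReal.toReal_one, smul_eq_mul, one_mul, hd1] at h
    rw [Igs]
    exact h.symm
  have hA : ∫ x, Real.sqrt (∑ i, (x i) ^ 2) ∂(gpi (k+1)) = Cd (k+1) * Igs (k+1) := by
    have h := integral_gpi_norm (k+1) (Nat.le_add_left 1 k) (fun y => y)
    rw [h, hd1, Igs]
    congr 1
    refine setIntegral_congr_fun measurableSet_Ioi fun y _ => ?_
    rw [pow_succ]; ring
  have hES : ∫ x, (∑ i, (x i) ^ 2) ∂(gpi (k+1)) = Cd (k+1) * Igs (k+2) := by
    have h := integral_gpi_norm (k+1) (Nat.le_add_left 1 k) (fun y => y ^ 2)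
    have hL : ∫ x, (fun y => y ^ 2) (Real.sqrt (∑ i, (x i) ^ 2)) ∂(gpi (k+1))
        = ∫ x, (∑ i, (x i) ^ 2) ∂(gpi (k+1)) := by
      refine integral_congr_ae (ae_of_all _ fun x => ?_)
      exact Real.sq_sqrt (Finset.sum_nonneg fun i _ => sq_nonneg _)
    rw [hL] at h
    rw [h, hd1, Igs]
    congr 1
    refine setIntegral_congr_fun measurableSet_Ioi fun y _ => ?_
    rw [show k + 2 = k + 1 + 1 from rfl, pow_succ, pow_succ]; ring
  have hCd : 0 ≤ Cd (k+1) := by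
    rw [Cd]
    positivity
  -- transfer to μ
  have hIf : ∫ ω, Real.sqrt (∑ i, (X i ω) ^ 2) ∂μ = Cd (k+1) * Igs (k+1) := by
    rw [← hA, ← hmap, integral_map hT.aemeasurable hNmeas.aestronglyMeasurable]
  have hif2 : ∫ ω, (∑ i, (X i ω) ^ 2) ∂μ = Cd (k+1) * Igs (k+2) := by
    rw [← hES, ← hmap, integral_map hT.aemeasurable hSmeas.aestronglyMeasurable]
  have hsq : ((fun ω => Real.sqrt (∑ i, (X i ω) ^ 2)) ^ 2)
      = fun ω => ∑ i, (X i ω) ^ 2 := funext fun ω => by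
    simp only [Pi.pow_apply]; exact hf2 ω
  rw [hsq, hif2, hIf, Igs_step k]
  -- final arithmetic
  have hkey := Igs_sq_ineq k
  have hfin : (k:ℝ) ≤ (Cd (k+1) * Igs (k+1)) ^ 2 := by
    calc (k:ℝ) = (k:ℝ) * (Cd (k+1) * Igs k) ^ 2 := by rw [key1]; ring
      _ = Cd (k+1) ^ 2 * ((k:ℝ) * Igs k ^ 2) := by ring
      _ ≤ Cd (k+1) ^ 2 * Igs (k+1) ^ 2 :=
          mul_le_mul_of_nonneg_left hkey (by positivity)
      _ = (Cd (k+1) * Igs (k+1)) ^ 2 := by ring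
  have : Cd (k+1) * (((k:ℝ) + 1) * Igs k) = (k:ℝ) + 1 := by
    calc Cd (k+1) * (((k:ℝ) + 1) * Igs k) = ((k:ℝ) + 1) * (Cd (k+1) * Igs k) := by ring
      _ = (k:ℝ) + 1 := by rw [key1]; ring
  rw [this]
  linarith
end

section
/- (Waist Concentration Theorem) For d ≥ 3 and ε > 0, λ^d(W_ε) ≥ (1 - (2/(ε√(d-1)))·exp(-ε²(d-1)/2))·λ^d(B̄₁(0)), where W_ε = {x ∈ B̄₁(0) : |x₁| ≤ ε}. -/
open MeasureTheory Metric Set Real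

/-- Sum of squares of coordinates equals norm squared. -/
lemma sq_sum_eq {n : ℕ} (x : EuclideanSpace ℝ (Fin n)) : ∑ i, x i ^ 2 = ‖x‖ ^ 2 := by
  rw [EuclideanSpace.norm_eq, Real.sq_sqrt (by positivity)]
  simp [Real.norm_eq_abs, sq_abs]

lemma ball_slice (n : ℕ) (hn : 1 ≤ n) (c : ℝ) :
    (volume : Measure (Fin n → ℝ)) {y | ∑ i, y i ^ 2 ≤ c}
      = ENNReal.ofReal (Real.sqrt c ^ n) * volume (ball (0 : EuclideanSpace ℝ (Fin n)) 1) := by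
  have hpre : ((MeasurableEquiv.toLp 2 (Fin n → ℝ)).symm) ⁻¹' {y | ∑ i, y i ^ 2 ≤ c}
      = {x : EuclideanSpace ℝ (Fin n) | ∑ i, x i ^ 2 ≤ c} := rfl
  have hmeas : MeasurableSet {y : Fin n → ℝ | ∑ i, y i ^ 2 ≤ c} := by
    apply measurableSet_le (by fun_prop) measurable_const
  rw [← (EuclideanSpace.volume_preserving_symm_measurableEquiv_toLp (Fin n)).measure_preimage
    hmeas.nullMeasurableSet, hpre]
  rcases le_or_gt 0 c with hc | hc
  · have hset : {x : EuclideanSpace ℝ (Fin n) | ∑ i, x i ^ 2 ≤ c} = closedBall 0 (Real.sqrt c) := by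
      ext x
      simp only [mem_setOf_eq, mem_closedBall, dist_zero_right, sq_sum_eq]
      rw [show ‖x‖ ≤ Real.sqrt c ↔ ‖x‖ ^ 2 ≤ c from (Real.le_sqrt (norm_nonneg x) hc)]
    rw [hset, Measure.addHaar_closedBall _ _ (Real.sqrt_nonneg c), finrank_euclideanSpace_fin]
  · have hset : {x : EuclideanSpace ℝ (Fin n) | ∑ i, x i ^ 2 ≤ c} = ∅ := by
      ext x
      simp only [mem_setOf_eq, mem_empty_iff_false, iff_false, not_le]
      calc c < 0 := hc
        _ ≤ ∑ i, x i ^ 2 := by positivity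
    rw [hset, Real.sqrt_eq_zero_of_nonpos hc.le, zero_pow (by omega), measure_empty,
      ENNReal.ofReal_zero, zero_mul]

lemma slice_volume (n : ℕ) (hn : 1 ≤ n) (i : Fin (n + 1)) (s : Set ℝ) (hs : MeasurableSet s) :
    volume {x : EuclideanSpace ℝ (Fin (n + 1)) | x ∈ closedBall 0 1 ∧ x i ∈ s}
      = (∫⁻ t in s, ENNReal.ofReal (Real.sqrt (1 - t ^ 2) ^ n))
        * volume (ball (0 : EuclideanSpace ℝ (Fin n)) 1) := by
  have e := (measurePreserving_piFinSuccAbove (fun _ : Fin (n + 1) => (volume : Measure ℝ)) i).comp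
    (EuclideanSpace.volume_preserving_symm_measurableEquiv_toLp (Fin (n + 1)))
  set T : Set (ℝ × (Fin n → ℝ)) := {p | p.1 ∈ s ∧ p.1 ^ 2 + ∑ j, p.2 j ^ 2 ≤ 1} with hT_def
  have hT : MeasurableSet T := by
    have hm : Measurable fun p : ℝ × (Fin n → ℝ) => p.1 ^ 2 + ∑ j, p.2 j ^ 2 := by
      apply Measurable.add (by fun_prop)
      exact Finset.measurable_sum _ fun j _ => by fun_prop
    exact (hs.preimage measurable_fst).inter (measurableSet_le hm measurable_const)
  have hpre :
      ((MeasurableEquiv.piFinSuccAbove (fun _ : Fin (n + 1) => ℝ) i) ∘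
        ((MeasurableEquiv.toLp 2 (Fin (n + 1) → ℝ)).symm)) ⁻¹' T
        = {x : EuclideanSpace ℝ (Fin (n + 1)) | x ∈ closedBall 0 1 ∧ x i ∈ s} := by
    ext x
    simp only [hT_def, mem_preimage, Function.comp_apply, mem_setOf_eq, mem_closedBall,
      dist_zero_right, MeasurableEquiv.piFinSuccAbove_apply]
    have hnorm : ‖x‖ ≤ 1 ↔ x i ^ 2 + ∑ j : Fin n, x (i.succAbove j) ^ 2 ≤ 1 := by
      rw [← Fin.sum_univ_succAbove (fun j => x j ^ 2) i, sq_sum_eq,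
        sq_le_one_iff_abs_le_one, abs_norm]
    constructor
    · rintro ⟨h1, h2⟩; exact ⟨hnorm.2 h2, h1⟩
    · rintro ⟨h1, h2⟩; exact ⟨h2, hnorm.1 h1⟩
  rw [← hpre, e.measure_preimage hT.nullMeasurableSet]
  rw [Measure.prod_apply hT]
  have hfib : ∀ t : ℝ, (Measure.pi fun _ : Fin n => (volume : Measure ℝ)) (Prod.mk t ⁻¹' T)
      = s.indicator (fun t => ENNReal.ofReal (Real.sqrt (1 - t ^ 2) ^ n)
          * volume (ball (0 : EuclideanSpace ℝ (Fin n)) 1)) t := by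
    intro t
    by_cases ht : t ∈ s
    · have : Prod.mk t ⁻¹' T = {y : Fin n → ℝ | ∑ j, y j ^ 2 ≤ 1 - t ^ 2} := by
        ext y
        simp only [hT_def, mem_preimage, mem_setOf_eq, ht, true_and]
        constructor <;> intro h <;> linarith
      rw [this, ← volume_pi, ball_slice n hn, indicator_of_mem ht]
    · have : Prod.mk t ⁻¹' T = ∅ := by
        ext y
        simp [hT_def, ht]
      rw [this, measure_empty, indicator_of_notMem ht]
  calc ∫⁻ t, (Measure.pi fun _ : Fin n => (volume : Measure ℝ)) (Prod.mk t ⁻¹' T)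
      = ∫⁻ t, s.indicator (fun t => ENNReal.ofReal (Real.sqrt (1 - t ^ 2) ^ n)
          * volume (ball (0 : EuclideanSpace ℝ (Fin n)) 1)) t := by
        exact lintegral_congr hfib
    _ = ∫⁻ t in s, ENNReal.ofReal (Real.sqrt (1 - t ^ 2) ^ n)
          * volume (ball (0 : EuclideanSpace ℝ (Fin n)) 1) := lintegral_indicator hs _
    _ = (∫⁻ t in s, ENNReal.ofReal (Real.sqrt (1 - t ^ 2) ^ n))
          * volume (ball (0 : EuclideanSpace ℝ (Fin n)) 1) := by
        rw [lintegral_mul_const]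
        fun_prop

lemma gauss_tail (b ε : ℝ) (hb : 0 < b) (hε : 0 < ε) :
    ∫ t in Set.Ioi ε, t * Real.exp (-b * t ^ 2) = Real.exp (-b * ε ^ 2) / (2 * b) := by
  have hderiv : ∀ x ∈ Ici ε, HasDerivAt (fun t => -Real.exp (-b * t ^ 2) / (2 * b))
      (x * Real.exp (-b * x ^ 2)) x := by
    intro x _
    have h1 : HasDerivAt (fun t : ℝ => -b * t ^ 2) (-b * (2 * x ^ 1)) x :=
      (hasDerivAt_pow 2 x).const_mul (-b)
    have h2 := (h1.exp.neg).div_const (2 * b)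
    refine HasDerivAt.congr_deriv h2 ?_
    rw [div_eq_iff (mul_pos two_pos hb).ne']
    ring
  have hint : IntegrableOn (fun t => t * Real.exp (-b * t ^ 2)) (Ioi ε) volume :=
    (integrable_mul_exp_neg_mul_sq hb).integrableOn
  have htend : Filter.Tendsto (fun t => -Real.exp (-b * t ^ 2) / (2 * b)) Filter.atTop (nhds 0) := by
    have h1 : Filter.Tendsto (fun t : ℝ => -b * t ^ 2) Filter.atTop Filter.atBot := by
      apply Filter.Tendsto.const_mul_atTop_of_neg (neg_neg_iff_pos.mpr hb)
      exact Filter.tendsto_pow_atTop two_ne_zero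
    have h2 := (Real.tendsto_exp_atBot.comp h1).neg.div_const (2 * b)
    simpa using h2
  rw [integral_Ioi_of_hasDerivAt_of_tendsto' hderiv hint htend]
  ring

lemma neg_tail_eq (g : ℝ → ℝ) (hg : Measurable g) (hsym : ∀ t, g (-t) = g t) (ε : ℝ) :
    ∫⁻ t in Iio (-ε), ENNReal.ofReal (g t) = ∫⁻ t in Ioi ε, ENNReal.ofReal (g t) := by
  have h1 : (volume : Measure ℝ).restrict (Iio (-ε))
      = Measure.map Neg.neg ((volume : Measure ℝ).restrict (Neg.neg ⁻¹' (Iio (-ε)))) := by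
    conv_lhs => rw [← Measure.map_neg_eq_self (volume : Measure ℝ)]
    rw [measurableEmbedding_neg.restrict_map]
  have h2 : (Neg.neg ⁻¹' (Iio (-ε)) : Set ℝ) = Ioi ε := by
    ext t; simp
  rw [h1, h2, lintegral_map (by fun_prop) measurable_neg]
  simp only [hsym]

lemma tail_bound (b ε : ℝ) (hb : 0 < b) (hε : 0 < ε) :
    ∫⁻ t in Ioi ε, ENNReal.ofReal (Real.exp (-b * t ^ 2))
      ≤ ENNReal.ofReal (ε⁻¹ * (Real.exp (-b * ε ^ 2) / (2 * b))) := by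
  have hint : IntegrableOn (fun t => ε⁻¹ * (t * Real.exp (-b * t ^ 2))) (Ioi ε) volume :=
    ((integrable_mul_exp_neg_mul_sq hb).const_mul ε⁻¹).integrableOn
  calc ∫⁻ t in Ioi ε, ENNReal.ofReal (Real.exp (-b * t ^ 2))
      ≤ ∫⁻ t in Ioi ε, ENNReal.ofReal (ε⁻¹ * (t * Real.exp (-b * t ^ 2))) := by
        apply setLIntegral_mono (by fun_prop)
        intro t ht
        apply ENNReal.ofReal_le_ofReal
        have h1 : (1 : ℝ) ≤ ε⁻¹ * t := by
          rw [← inv_mul_cancel₀ hε.ne']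
          exact mul_le_mul_of_nonneg_left (le_of_lt ht) (by positivity)
        nlinarith [Real.exp_pos (-b * t ^ 2)]
    _ = ENNReal.ofReal (∫ t in Ioi ε, ε⁻¹ * (t * Real.exp (-b * t ^ 2))) := by
        rw [ofReal_integral_eq_lintegral_ofReal hint]
        filter_upwards [ae_restrict_mem measurableSet_Ioi] with t ht
        have h2 : (0:ℝ) < t := hε.trans ht
        positivity
    _ = ENNReal.ofReal (ε⁻¹ * (Real.exp (-b * ε ^ 2) / (2 * b))) := by
        rw [integral_const_mul, gauss_tail b ε hb hε]

lemma exp_twothirds_le_two : Real.exp ((2:ℝ)/3) ≤ 2 := by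
  have h1 : Real.exp ((2:ℝ)/3) ^ 3 = Real.exp 2 := by
    rw [← Real.exp_nat_mul]; norm_num
  have h3 : Real.exp (2:ℝ) = Real.exp 1 ^ 2 := by rw [← Real.exp_nat_mul]; norm_num
  have h2 : Real.exp (2:ℝ) < 8 := by
    rw [h3]; nlinarith [Real.exp_one_lt_d9, Real.exp_pos 1]
  by_contra hcon
  push_neg at hcon
  have h4 : (2:ℝ) ^ 3 < Real.exp ((2:ℝ)/3) ^ 3 :=
    pow_lt_pow_left₀ hcon (by norm_num) (by norm_num)
  rw [h1] at h4
  norm_num at h4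
  linarith

lemma pow_ge_half (n : ℕ) (hn : 2 ≤ n) : (1 : ℝ) / 2 ≤ (1 - 1 / (2 * n)) ^ n := by
  have hn1 : (2 : ℝ) ≤ (n : ℝ) := by exact_mod_cast hn
  have hpos : (0 : ℝ) < 2 * (n : ℝ) - 1 := by linarith
  set y : ℝ := 1 / (2 * (n : ℝ) - 1) with hy
  have hy0 : 0 < y := by positivity
  have h1 : Real.exp (-y) ≤ 1 - 1 / (2 * (n : ℝ)) := by
    have h2 : y + 1 ≤ Real.exp y := by
      have := Real.add_one_le_exp y; linarith
    have h3 : Real.exp (-y) = 1 / Real.exp y := by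
      rw [Real.exp_neg, one_div]
    have h4 : 1 / Real.exp y ≤ 1 / (y + 1) :=
      one_div_le_one_div_of_le (by positivity) h2
    have h5 : 1 / (y + 1) = 1 - 1 / (2 * (n : ℝ)) := by
      rw [hy]; field_simp; ring
    rw [h3, ← h5]; exact h4
  have h5 : Real.exp (-y) ^ n ≤ (1 - 1 / (2 * (n : ℝ))) ^ n :=
    pow_le_pow_left₀ (Real.exp_pos _).le h1 n
  refine le_trans ?_ h5
  rw [← Real.exp_nat_mul]
  have hny : (n : ℝ) * y ≤ 2/3 := by
    rw [hy, mul_one_div, div_le_div_iff₀ hpos (by norm_num)]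
    linarith
  have h6 : Real.exp (-(2/3 : ℝ)) ≤ Real.exp ((n : ℝ) * -y) := by
    apply Real.exp_le_exp.2
    rw [mul_neg, neg_le_neg_iff]
    exact hny
  refine le_trans ?_ h6
  have h7 := one_div_le_one_div_of_le (Real.exp_pos ((2:ℝ)/3)) exp_twothirds_le_two
  rw [Real.exp_neg, ← one_div]
  linarith

theorem waist_concentration (d : ℕ) (hd : 3 ≤ d) (ε : ℝ) (hε : 0 < ε) :
    volume {x : EuclideanSpace ℝ (Fin d) |
        x ∈ closedBall 0 1 ∧ |x ⟨0, by omega⟩| ≤ ε}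
      ≥ ENNReal.ofReal
          (1 - 2 / (ε * Real.sqrt (d - 1)) * Real.exp (-(ε ^ 2 * (d - 1) / 2))) *
        volume (closedBall (0 : EuclideanSpace ℝ (Fin d)) 1) := by
  obtain ⟨n, rfl⟩ : ∃ n, d = n + 1 := ⟨d - 1, by omega⟩
  have hn : 2 ≤ n := by omega
  have hN2 : (2 : ℝ) ≤ (n : ℝ) := by exact_mod_cast hn
  have hN0 : (0 : ℝ) < (n : ℝ) := by linarith
  have hcast : ((n + 1 : ℕ) : ℝ) - 1 = (n : ℝ) := by push_cast; ring
  rw [hcast]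
  set N : ℝ := (n : ℝ) with hNdef
  set E : ℝ := Real.exp (-(ε ^ 2 * N / 2)) with hEdef
  set c : ℝ := 2 / (ε * Real.sqrt N) * E with hcdef
  set f : ℝ → ENNReal := fun t => ENNReal.ofReal (Real.sqrt (1 - t ^ 2) ^ n) with hfdef
  set V := volume (ball (0 : EuclideanSpace ℝ (Fin n)) 1) with hVdef
  have hsW : MeasurableSet {t : ℝ | |t| ≤ ε} := measurableSet_le measurable_abs measurable_const
  have hsC : MeasurableSet {t : ℝ | ε < |t|} := measurableSet_lt measurable_const measurable_abs
  set IW := ∫⁻ t in {t : ℝ | |t| ≤ ε}, f t with hIWdef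
  set IC := ∫⁻ t in {t : ℝ | ε < |t|}, f t with hICdef
  set I := ∫⁻ t, f t with hIdef
  have hW : volume {x : EuclideanSpace ℝ (Fin (n + 1)) |
      x ∈ closedBall 0 1 ∧ |x ⟨0, by omega⟩| ≤ ε} = IW * V :=
    slice_volume n (by omega) ⟨0, by omega⟩ {t : ℝ | |t| ≤ ε} hsW
  have hC : volume {x : EuclideanSpace ℝ (Fin (n + 1)) |
      x ∈ closedBall 0 1 ∧ ε < |x ⟨0, by omega⟩|} = IC * V :=
    slice_volume n (by omega) ⟨0, by omega⟩ {t : ℝ | ε < |t|} hsC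
  have hB : volume (closedBall (0 : EuclideanSpace ℝ (Fin (n + 1))) 1) = I * V := by
    have h0 := slice_volume n (by omega) ⟨0, by omega⟩ Set.univ MeasurableSet.univ
    have h1 : {x : EuclideanSpace ℝ (Fin (n + 1)) | x ∈ closedBall 0 1 ∧
        x ⟨0, by omega⟩ ∈ (Set.univ : Set ℝ)} = closedBall 0 1 := by
      ext x; simp
    rw [h1, Measure.restrict_univ] at h0
    exact h0
  have hcompl : {t : ℝ | |t| ≤ ε}ᶜ = {t : ℝ | ε < |t|} := by
    ext t; simp [not_le]
  have hsplit : I = IW + IC := by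
    rw [hIdef, hIWdef, hICdef, ← hcompl]
    exact (lintegral_add_compl f hsW).symm
  -- trivial case
  rcases le_or_gt (1 - c) 0 with hc1 | hc1
  · rw [ENNReal.ofReal_eq_zero.mpr hc1, zero_mul]
    exact zero_le
  have hcnn : 0 ≤ c := by
    rw [hcdef]
    have := Real.sqrt_pos.mpr hN0
    positivity
  -- finiteness
  have hV0 : V ≠ 0 := (measure_ball_pos volume 0 one_pos).ne'
  have hBfin : volume (closedBall (0 : EuclideanSpace ℝ (Fin (n + 1))) 1) ≠ ⊤ :=
    measure_closedBall_lt_top.ne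
  have hIfin : I ≠ ⊤ := by
    intro htop
    rw [hB, htop, ENNReal.top_mul hV0] at hBfin
    exact hBfin rfl
  -- Step A: pointwise Gaussian bound and tail estimate
  have hb2 : (0 : ℝ) < N / 2 := by linarith
  have hfg : ∀ t : ℝ, f t ≤ ENNReal.ofReal (Real.exp (-(N / 2) * t ^ 2)) := by
    intro t
    rw [hfdef]
    apply ENNReal.ofReal_le_ofReal
    have hsq : Real.sqrt (1 - t ^ 2) ≤ Real.exp (-t ^ 2 / 2) := by
      have h1 : 1 - t ^ 2 ≤ Real.exp (-t ^ 2) := by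
        have := Real.add_one_le_exp (-t ^ 2); linarith
      have h2 : Real.sqrt (Real.exp (-t ^ 2)) = Real.exp (-t ^ 2 / 2) := by
        rw [show Real.exp (-t ^ 2) = Real.exp (-t ^ 2 / 2) ^ 2 by
          rw [← Real.exp_nat_mul]; ring_nf]
        exact Real.sqrt_sq (Real.exp_pos _).le
      calc Real.sqrt (1 - t ^ 2) ≤ Real.sqrt (Real.exp (-t ^ 2)) := Real.sqrt_le_sqrt h1
        _ = Real.exp (-t ^ 2 / 2) := h2
    calc Real.sqrt (1 - t ^ 2) ^ n ≤ Real.exp (-t ^ 2 / 2) ^ n :=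
          pow_le_pow_left₀ (Real.sqrt_nonneg _) hsq n
      _ = Real.exp (-(N / 2) * t ^ 2) := by
          rw [← Real.exp_nat_mul, hNdef]; ring_nf
  have hsetC : {t : ℝ | ε < |t|} = Iio (-ε) ∪ Ioi ε := by
    ext t
    simp only [mem_setOf_eq, Set.mem_union, mem_Iio, mem_Ioi, lt_abs, lt_neg]
    tauto
  have hstepA : IC ≤ ENNReal.ofReal (2 / (ε * N) * E) := by
    calc IC ≤ ∫⁻ t in {t : ℝ | ε < |t|}, ENNReal.ofReal (Real.exp (-(N / 2) * t ^ 2)) := by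
          rw [hICdef]; exact lintegral_mono fun t => hfg t
      _ ≤ (∫⁻ t in Iio (-ε), ENNReal.ofReal (Real.exp (-(N / 2) * t ^ 2)))
            + ∫⁻ t in Ioi ε, ENNReal.ofReal (Real.exp (-(N / 2) * t ^ 2)) := by
          rw [hsetC]; exact lintegral_union_le _ _ _
      _ = 2 * ∫⁻ t in Ioi ε, ENNReal.ofReal (Real.exp (-(N / 2) * t ^ 2)) := by
          rw [neg_tail_eq _ (by fun_prop) (fun t => by ring_nf) ε, two_mul]
      _ ≤ 2 * ENNReal.ofReal (ε⁻¹ * (Real.exp (-(N / 2) * ε ^ 2) / (2 * (N / 2)))) :=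
          mul_le_mul_right (tail_bound (N / 2) ε hb2 hε) 2
      _ = ENNReal.ofReal (2 / (ε * N) * E) := by
          rw [← ENNReal.ofReal_ofNat, ← ENNReal.ofReal_mul (by norm_num)]
          congr 1
          rw [hEdef]
          have hNne : N ≠ 0 := hN0.ne'
          have : -(N / 2) * ε ^ 2 = -(ε ^ 2 * N / 2) := by ring
          rw [this]
          field_simp
          try ring
  -- Step B: lower bound for I
  set a : ℝ := Real.sqrt (1 / (2 * N)) with hadef
  have ha0 : 0 < a := Real.sqrt_pos.mpr (by positivity)
  have ha2 : a ^ 2 = 1 / (2 * N) := Real.sq_sqrt (by positivity)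
  have ha1 : a ^ 2 ≤ 1 := by rw [ha2]; rw [div_le_one (by linarith)]; linarith
  set K : ℝ := Real.sqrt (1 - a ^ 2) ^ n with hKdef
  have hK0 : 0 ≤ K := by positivity
  have hstepB : ENNReal.ofReal (2 * a * K) ≤ I := by
    calc ENNReal.ofReal (2 * a * K) = ENNReal.ofReal K * volume (Icc (-a) a) := by
          rw [Real.volume_Icc, ← ENNReal.ofReal_mul hK0]
          congr 1
          ring
      _ = ∫⁻ _ in Icc (-a) a, ENNReal.ofReal K := (setLIntegral_const _ _).symm
      _ ≤ ∫⁻ t in Icc (-a) a, f t := by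
          apply setLIntegral_mono (by rw [hfdef]; fun_prop)
          intro t ht
          rw [hfdef]
          apply ENNReal.ofReal_le_ofReal
          rw [hKdef]
          apply pow_le_pow_left₀ (Real.sqrt_nonneg _)
          apply Real.sqrt_le_sqrt
          have : t ^ 2 ≤ a ^ 2 := sq_le_sq' ht.1 ht.2
          linarith
      _ ≤ I := setLIntegral_le_lintegral _ _
  -- Step C: real inequality
  have hs : (0 : ℝ) < Real.sqrt N := Real.sqrt_pos.mpr hN0
  have hs2 : Real.sqrt N ^ 2 = N := Real.sq_sqrt hN0.le
  have hE0 : 0 < E := Real.exp_pos _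
  have hKhalf : 1 / 2 ≤ K ^ 2 := by
    rw [hKdef, ← pow_mul, mul_comm n 2, pow_mul, Real.sq_sqrt (by linarith), ha2]
    exact pow_ge_half n hn
  have hkey : 1 / Real.sqrt N ≤ 2 * a * K := by
    rw [← Real.sqrt_sq (by positivity : (0:ℝ) ≤ 1 / Real.sqrt N),
      ← Real.sqrt_sq (by positivity : (0:ℝ) ≤ 2 * a * K)]
    apply Real.sqrt_le_sqrt
    have h1 : (2 * a * K) ^ 2 = 4 * a ^ 2 * K ^ 2 := by ring
    have h2 : (1 / Real.sqrt N) ^ 2 = 1 / N := by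
      rw [div_pow, one_pow, hs2]
    rw [h1, h2, ha2]
    have h3 : 4 * (1 / (2 * N)) * K ^ 2 = 2 / N * K ^ 2 := by
      congr 1
      rw [mul_one_div]
      rw [div_eq_div_iff (by positivity) (by positivity)]
      ring
    rw [h3]
    calc 1 / N = 2 / N * (1 / 2) := by ring
      _ ≤ 2 / N * K ^ 2 := mul_le_mul_of_nonneg_left hKhalf (by positivity)
  have hstepC : 2 / (ε * N) * E ≤ c * (2 * a * K) := by
    have haux : ∀ s e eps : ℝ, 0 < s → 0 < eps →
        (2 / (eps * s) * e) * (1 / s) = 2 / (eps * (s * s)) * e := by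
      intro s e eps hs' heps'
      field_simp
    have h1 : c * (1 / Real.sqrt N) = 2 / (ε * N) * E := by
      rw [hcdef, haux _ _ _ hs hε, Real.mul_self_sqrt hN0.le]
    calc 2 / (ε * N) * E = c * (1 / Real.sqrt N) := h1.symm
      _ ≤ c * (2 * a * K) := mul_le_mul_of_nonneg_left hkey hcnn
  -- Assemble
  have hIC2 : IC ≤ ENNReal.ofReal c * I := by
    calc IC ≤ ENNReal.ofReal (2 / (ε * N) * E) := hstepA
      _ ≤ ENNReal.ofReal (c * (2 * a * K)) := ENNReal.ofReal_le_ofReal hstepC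
      _ = ENNReal.ofReal c * ENNReal.ofReal (2 * a * K) := ENNReal.ofReal_mul hcnn
      _ ≤ ENNReal.ofReal c * I := mul_le_mul_right hstepB _
  have hkey2 : ENNReal.ofReal (1 - c) * I ≤ IW := by
    have h1 : ENNReal.ofReal (1 - c) * I + ENNReal.ofReal c * I = I := by
      rw [← add_mul, ← ENNReal.ofReal_add (by linarith) hcnn]
      norm_num
    have h2 : ENNReal.ofReal (1 - c) * I + ENNReal.ofReal c * I ≤ IW + ENNReal.ofReal c * I :=
      calc ENNReal.ofReal (1 - c) * I + ENNReal.ofReal c * I = I := h1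
        _ = IW + IC := hsplit
        _ ≤ IW + ENNReal.ofReal c * I := add_le_add_right hIC2 IW
    exact ENNReal.le_of_add_le_add_right (ENNReal.mul_ne_top ENNReal.ofReal_ne_top hIfin) h2
  rw [ge_iff_le, hW, hB, ← mul_assoc]
  exact mul_le_mul_left hkey2 V
end

section
/- Let d ≥ 3, n ≥ 2, and let x⁽¹⁾,...,x⁽ⁿ⁾ be independent points drawn uniformly at random from the closed unit ball B̄₁(0) ⊆ ℝ^d. Then P[‖x⁽ʲ⁾‖ ≥ 1 - (2 ln n)/d for all j = 1,...,n] ≥ 1 - 1/n. -/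
open MeasureTheory ProbabilityTheory Metric ENNReal

theorem uniform_ball_norm_close_to_one {Ω : Type*} [MeasurableSpace Ω]
    (μ : Measure Ω) [IsProbabilityMeasure μ] (d n : ℕ) (hd : 3 ≤ d) (hn : 2 ≤ n)
    (X : Fin n → Ω → EuclideanSpace ℝ (Fin d))
    (hmeas : ∀ j, Measurable (X j))
    (hindep : iIndepFun X μ)
    (hdist : ∀ j, μ.map (X j)
      = ProbabilityTheory.cond volume (closedBall (0 : EuclideanSpace ℝ (Fin d)) 1)) :
    μ {ω | ∀ j, 1 - 2 * Real.log n / d ≤ ‖X j ω‖} ≥ 1 - 1 / n := by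
  set r : ℝ := 1 - 2 * Real.log n / d with hrdef
  by_cases hr0 : r ≤ 0
  · have huniv : {ω | ∀ j, r ≤ ‖X j ω‖} = Set.univ := by
      ext ω
      simp only [Set.mem_setOf_eq, Set.mem_univ, iff_true]
      intro j; exact hr0.trans (norm_nonneg _)
    rw [huniv, measure_univ]
    exact tsub_le_self
  push_neg at hr0
  have hn0 : (0:ℝ) < n := by positivity
  have hd0 : (0:ℝ) < d := by positivity
  -- r ≤ 1
  have hr1 : r ≤ 1 := by
    have : 0 ≤ 2 * Real.log n / d := by
      apply div_nonneg _ hd0.le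
      have : (1:ℝ) ≤ n := by exact_mod_cast hn.trans' (by norm_num)
      nlinarith [Real.log_nonneg this]
    simp only [hrdef]; linarith
  -- r ^ d ≤ 1 / n ^ 2
  have hrpow : r ^ d ≤ 1 / (n:ℝ) ^ 2 := by
    have h1 : r ≤ Real.exp (-(2 * Real.log n / d)) := by
      have := Real.add_one_le_exp (-(2 * Real.log n / d))
      simp only [hrdef]; linarith
    have h2 : r ^ d ≤ Real.exp (-(2 * Real.log n / d)) ^ d :=
      pow_le_pow_left₀ hr0.le h1 d
    have h3 : Real.exp (-(2 * Real.log n / d)) ^ d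
        = Real.exp (-(2 * Real.log n)) := by
      rw [← Real.exp_nat_mul]
      congr 1
      field_simp
    rw [h3] at h2
    have h4 : Real.exp (-(2 * Real.log n)) = 1 / (n:ℝ) ^ 2 := by
      rw [Real.exp_neg]
      rw [show (2:ℝ) * Real.log n = Real.log ((n:ℝ)^2) by
        rw [Real.log_pow]; push_cast; ring]
      rw [Real.exp_log (by positivity)]
      simp [one_div]
    linarith
  -- per-coordinate bound
  have hV0 : volume (closedBall (0 : EuclideanSpace ℝ (Fin d)) 1) ≠ 0 := by
    have : volume (ball (0 : EuclideanSpace ℝ (Fin d)) 1) ≠ 0 := (measure_ball_pos _ _ one_pos).ne'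
    exact fun h => this (measure_mono_null ball_subset_closedBall h)
  have hVt : volume (closedBall (0 : EuclideanSpace ℝ (Fin d)) 1) ≠ ⊤ := measure_closedBall_lt_top.ne
  have hkey : ∀ j, μ {ω | ‖X j ω‖ < r} ≤ ENNReal.ofReal (1 / (n:ℝ) ^ 2) := by
    intro j
    have hset : {ω | ‖X j ω‖ < r} = X j ⁻¹' (ball (0 : EuclideanSpace ℝ (Fin d)) r) := by
      ext ω; simp [mem_ball_iff_norm]
    rw [hset, ← Measure.map_apply (hmeas j) measurableSet_ball, hdist j,
      cond_apply measurableSet_closedBall]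
    have hsub : volume (closedBall (0 : EuclideanSpace ℝ (Fin d)) 1 ∩ ball (0 : EuclideanSpace ℝ (Fin d)) r)
        ≤ volume (closedBall (0 : EuclideanSpace ℝ (Fin d)) r) :=
      measure_mono (fun x hx => ball_subset_closedBall hx.2)
    have hcb : volume (closedBall (0 : EuclideanSpace ℝ (Fin d)) r)
        = ENNReal.ofReal (r ^ d) * volume (ball (0 : EuclideanSpace ℝ (Fin d)) 1) := by
      rw [Measure.addHaar_closedBall volume 0 hr0.le, finrank_euclideanSpace_fin]
    have hb1 : volume (ball (0 : EuclideanSpace ℝ (Fin d)) 1) = volume (closedBall (0 : EuclideanSpace ℝ (Fin d)) 1) := by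
      have := Measure.addHaar_closedBall volume (0 : EuclideanSpace ℝ (Fin d)) (zero_le_one)
      simpa using this.symm
    calc (volume (closedBall (0 : EuclideanSpace ℝ (Fin d)) 1))⁻¹ * volume (closedBall (0 : EuclideanSpace ℝ (Fin d)) 1 ∩ ball (0 : EuclideanSpace ℝ (Fin d)) r)
        ≤ (volume (closedBall (0 : EuclideanSpace ℝ (Fin d)) 1))⁻¹
          * (ENNReal.ofReal (r ^ d) * volume (closedBall (0 : EuclideanSpace ℝ (Fin d)) 1)) := by
          apply mul_le_mul_right
          rw [← hb1, ← hcb]; exact hsub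
      _ = ENNReal.ofReal (r ^ d) := by
          rw [mul_comm (ENNReal.ofReal _), ← mul_assoc,
            ENNReal.inv_mul_cancel hV0 hVt, one_mul]
      _ ≤ ENNReal.ofReal (1 / (n:ℝ) ^ 2) := ENNReal.ofReal_le_ofReal hrpow
  -- union bound
  set C : Set Ω := ⋃ j, {ω | ‖X j ω‖ < r} with hC
  have hCmeas : MeasurableSet C :=
    MeasurableSet.iUnion fun j =>
      measurableSet_lt (Measurable.norm (hmeas j)) measurable_const
  have hCbound : μ C ≤ 1 / (n : ℝ≥0∞) := by
    calc μ C ≤ ∑ j : Fin n, μ {ω | ‖X j ω‖ < r} := measure_iUnion_fintype_le μ _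
      _ ≤ ∑ _j : Fin n, ENNReal.ofReal (1 / (n:ℝ) ^ 2) :=
          Finset.sum_le_sum fun j _ => hkey j
      _ = (n : ℝ≥0∞) * ENNReal.ofReal (1 / (n:ℝ) ^ 2) := by
          rw [Finset.sum_const]; simp [mul_comm]
      _ = 1 / (n : ℝ≥0∞) := by
          have hne : (n : ℝ≥0∞) ≠ 0 := by exact_mod_cast (by omega : n ≠ 0)
          rw [ENNReal.ofReal_div_of_pos (by positivity), ENNReal.ofReal_pow (by positivity)]
          rw [ENNReal.ofReal_one, ENNReal.ofReal_natCast]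
          rw [ENNReal.div_eq_inv_mul, ENNReal.div_eq_inv_mul, mul_one, mul_one]
          rw [pow_two, ENNReal.mul_inv (Or.inl hne) (Or.inl (ENNReal.natCast_ne_top n)),
            ← mul_assoc, ENNReal.mul_inv_cancel hne (ENNReal.natCast_ne_top n), one_mul]
  have hcompl : {ω | ∀ j, r ≤ ‖X j ω‖} = Cᶜ := by
    ext ω
    simp only [hC, Set.mem_setOf_eq, Set.mem_compl_iff, Set.mem_iUnion, not_exists, not_lt]
  rw [hcompl, measure_compl hCmeas (measure_ne_top μ C), measure_univ]
  exact tsub_le_tsub_left hCbound 1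
end

section
/- (Gaussian Annulus Theorem) Let X be a random vector in ℝ^d with independent standard normal coordinates. Then for every 0 ≤ ε ≤ √d, P[|‖X‖ - √d| ≥ ε] ≤ 2·exp(-ε²/16). -/
open MeasureTheory ProbabilityTheory Real

lemma aux_pdf_eq : gaussianPDF 0 1 =
    fun x => ((Real.toNNReal (gaussianPDFReal 0 1 x) : NNReal) : ENNReal) := rfl

lemma aux_pdf_mul {t : ℝ} (x : ℝ) :
    gaussianPDFReal 0 1 x * Real.exp (t * x^2)
      = (Real.sqrt (2*π))⁻¹ * Real.exp (-(1/2 - t) * x^2) := by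
  simp only [gaussianPDFReal, NNReal.coe_one, mul_one, sub_zero]
  rw [mul_assoc, ← Real.exp_add]
  ring_nf

lemma aux_integral_gaussianReal (g : ℝ → ℝ) :
    ∫ x, g x ∂(gaussianReal 0 1) = ∫ x, gaussianPDFReal 0 1 x * g x := by
  rw [gaussianReal_of_var_ne_zero 0 one_ne_zero, aux_pdf_eq,
    integral_withDensity_eq_integral_smul
      ((measurable_gaussianPDFReal 0 1).real_toNNReal) g]
  congr 1; ext x
  rw [NNReal.smul_def, smul_eq_mul, Real.coe_toNNReal _ (gaussianPDFReal_nonneg _ _ _)]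

lemma aux_integrable_exp_sq {t : ℝ} (ht : t < 1/2) :
    Integrable (fun x => Real.exp (t * x^2)) (gaussianReal 0 1) := by
  rw [gaussianReal_of_var_ne_zero 0 one_ne_zero, aux_pdf_eq,
    integrable_withDensity_iff_integrable_smul
      ((measurable_gaussianPDFReal 0 1).real_toNNReal)]
  refine ((integrable_exp_neg_mul_sq (show (0:ℝ) < 1/2 - t by linarith)).const_mul
    ((Real.sqrt (2*π))⁻¹)).congr (Filter.Eventually.of_forall fun x => ?_)
  simp only [NNReal.smul_def, smul_eq_mul]
  rw [Real.coe_toNNReal _ (gaussianPDFReal_nonneg _ _ _), aux_pdf_mul]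

lemma aux_integral_exp_sq {t : ℝ} (ht : t < 1/2) :
    ∫ x, Real.exp (t * x^2) ∂(gaussianReal 0 1) = (Real.sqrt (1 - 2*t))⁻¹ := by
  rw [aux_integral_gaussianReal]
  simp_rw [aux_pdf_mul]
  rw [integral_const_mul, integral_gaussian]
  have hb : (0:ℝ) < 1/2 - t := by linarith
  rw [show (1:ℝ) - 2*t = 2*(1/2 - t) by ring,
    Real.sqrt_mul (by norm_num : (0:ℝ) ≤ 2), Real.sqrt_mul (by norm_num : (0:ℝ) ≤ 2) (1/2 - t),
    Real.sqrt_div pi_nonneg]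
  have hπ : (0:ℝ) < Real.sqrt π := sqrt_pos.mpr pi_pos
  have h2' : (0:ℝ) < Real.sqrt 2 := by positivity
  have hbb : (0:ℝ) < Real.sqrt (1/2 - t) := sqrt_pos.mpr hb
  have h1 : Real.sqrt π ≠ 0 := hπ.ne'
  have h2 : Real.sqrt 2 ≠ 0 := h2'.ne'
  have h3 : Real.sqrt (1/2 - t) ≠ 0 := hbb.ne'
  field_simp

lemma aux_exp_le_one_sub {x : ℝ} (h0 : 0 ≤ x) (h1 : x ≤ 1/2) :
    Real.exp (-x - x^2) ≤ 1 - x := by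
  have h2 : 1 + (x + x^2) + (x + x^2)^2/2 ≤ Real.exp (x + x^2) :=
    Real.quadratic_le_exp_of_nonneg (by positivity)
  have h4 : Real.exp (-x - x^2) * Real.exp (x + x^2) = 1 := by
    rw [← Real.exp_add]; ring_nf; exact Real.exp_zero
  nlinarith [Real.exp_pos (-x - x^2), Real.exp_pos (x + x^2)]

lemma aux_exp_le_one_add {x : ℝ} (h0 : 0 ≤ x) :
    Real.exp (x - x^2) ≤ 1 + x := by
  have h2 : 1 + (x^2 - x) ≤ Real.exp (x^2 - x) := by
    linarith [Real.add_one_le_exp (x^2 - x)]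
  have h4 : Real.exp (x - x^2) * Real.exp (x^2 - x) = 1 := by
    rw [← Real.exp_add]; ring_nf; exact Real.exp_zero
  nlinarith [Real.exp_pos (x - x^2), Real.exp_pos (x^2 - x)]

lemma aux_tail_split {s ε u v dd : ℝ} (hs0 : 0 < s) (hεpos : 0 < ε) (hε1 : ε ≤ s)
    (hsq : s^2 = dd) (hu0 : 0 ≤ u) (hu2 : u^2 = v) (h : ε ≤ |u - s|) :
    dd + ε*s ≤ v ∨ v ≤ dd - ε*s := by
  rcases le_abs.mp h with h' | h'
  · refine Or.inl ?_
    nlinarith [mul_nonneg (by linarith : (0:ℝ) ≤ u - s - ε) (by linarith : (0:ℝ) ≤ u + s + ε),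
      mul_nonneg hεpos.le hs0.le]
  · refine Or.inr ?_
    nlinarith [mul_nonneg (by linarith : (0:ℝ) ≤ s - ε - u) (by linarith : (0:ℝ) ≤ s - ε + u),
      mul_le_mul_of_nonneg_left hε1 hεpos.le]

open MeasureTheory ProbabilityTheory

theorem gaussian_annulus {Ω : Type*} [MeasurableSpace Ω]
    (μ : Measure Ω) [IsProbabilityMeasure μ] (d : ℕ) (X : Fin d → Ω → ℝ)
    (hmeas : ∀ i, Measurable (X i))
    (hindep : iIndepFun X μ)
    (hdist : ∀ i, μ.map (X i) = gaussianReal 0 1)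
    (ε : ℝ) (hε0 : 0 ≤ ε) (hε1 : ε ≤ Real.sqrt d) :
    μ {ω | ε ≤ |Real.sqrt (∑ i, (X i ω) ^ 2) - Real.sqrt d|}
      ≤ ENNReal.ofReal (2 * Real.exp (-(ε ^ 2) / 16)) := by
  rcases eq_or_lt_of_le hε0 with h0 | hεpos
  · refine le_trans prob_le_one ?_
    rw [← h0]
    norm_num
  set s : ℝ := Real.sqrt d with hs_def
  have hs0 : 0 < s := lt_of_lt_of_le hεpos hε1
  have hsq : s^2 = (d:ℝ) := Real.sq_sqrt (Nat.cast_nonneg d)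
  set l : ℝ := ε / (4*s) with hl_def
  have hl0 : 0 < l := by positivity
  have hl4 : l ≤ 1/4 := by
    rw [hl_def, div_le_iff₀ (by positivity)]; nlinarith
  have hl2 : l < 1/2 := by linarith
  -- squares of coordinates
  obtain ⟨Y, hY⟩ : ∃ Y : Fin d → Ω → ℝ, Y = fun i ω => X i ω ^ 2 := ⟨_, rfl⟩
  have hYmeas : ∀ i, Measurable (Y i) := by
    rw [hY]; exact fun i => (hmeas i).pow_const 2
  have hYindep : iIndepFun Y μ := by
    rw [hY]
    exact hindep.comp (fun _ => fun x : ℝ => x ^ 2) (fun _ => measurable_id.pow_const 2)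
  have hintY : ∀ (t : ℝ), t < 1/2 → ∀ i, Integrable (fun ω => Real.exp (t * Y i ω)) μ := by
    intro t ht i
    have h := aux_integrable_exp_sq ht
    rw [← hdist i] at h
    simp only [hY]
    have hgm : Measurable fun x : ℝ => Real.exp (t * x^2) := by measurability
    exact (integrable_map_measure hgm.aestronglyMeasurable (hmeas i).aemeasurable).mp h
  have hmgfY : ∀ (t : ℝ), t < 1/2 → ∀ i, mgf (Y i) μ t = (Real.sqrt (1 - 2*t))⁻¹ := by
    intro t ht i
    rw [mgf]
    simp only [hY]
    have hgm : Measurable fun x : ℝ => Real.exp (t * x^2) := by measurability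
    have h1 : ∫ ω, Real.exp (t * X i ω ^ 2) ∂μ
        = ∫ x, Real.exp (t * x^2) ∂(μ.map (X i)) :=
      (integral_map (hmeas i).aemeasurable hgm.aestronglyMeasurable).symm
    rw [h1, hdist i, aux_integral_exp_sq ht]
  obtain ⟨S, hS⟩ : ∃ S : Ω → ℝ, S = ∑ i, Y i := ⟨_, rfl⟩
  have hSa : ∀ ω, S ω = ∑ i, (X i ω)^2 := fun ω => by
    rw [hS]; simp [Finset.sum_apply, hY]
  have hSint : ∀ (t : ℝ), t < 1/2 → Integrable (fun ω => Real.exp (t * S ω)) μ := by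
    intro t ht
    rw [hS]
    exact hYindep.integrable_exp_mul_sum hYmeas (fun i _ => hintY t ht i)
  have hSmgf : ∀ (t : ℝ), t < 1/2 → mgf S μ t = ((Real.sqrt (1 - 2*t))⁻¹)^d := by
    intro t ht
    rw [hS, hYindep.mgf_sum hYmeas]
    simp [hmgfY t ht]
  -- per coordinate mgf bounds
  have hb1 : (Real.sqrt (1 - 2*l))⁻¹ ≤ Real.exp (l + 2*l^2) := by
    have hx := aux_exp_le_one_sub (by linarith : (0:ℝ) ≤ 2*l) (by linarith : 2*l ≤ 1/2)
    have hsqrt : Real.exp (-(l + 2*l^2)) ≤ Real.sqrt (1 - 2*l) := by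
      rw [Real.le_sqrt (Real.exp_pos _).le (by linarith : (0:ℝ) ≤ 1 - 2*l)]
      calc Real.exp (-(l + 2*l^2))^2 = Real.exp (-(2*l) - (2*l)^2) := by
            rw [← Real.exp_nat_mul]; ring_nf
        _ ≤ 1 - 2*l := hx
    calc (Real.sqrt (1 - 2*l))⁻¹ ≤ (Real.exp (-(l + 2*l^2)))⁻¹ := by
          apply inv_anti₀ (Real.exp_pos _) hsqrt
      _ = Real.exp (l + 2*l^2) := by rw [← Real.exp_neg, neg_neg]
  have hb2 : (Real.sqrt (1 + 2*l))⁻¹ ≤ Real.exp (-l + 2*l^2) := by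
    have hx := aux_exp_le_one_add (by linarith : (0:ℝ) ≤ 2*l)
    have hsqrt : Real.exp (l - 2*l^2) ≤ Real.sqrt (1 + 2*l) := by
      rw [Real.le_sqrt (Real.exp_pos _).le (by linarith : (0:ℝ) ≤ 1 + 2*l)]
      calc Real.exp (l - 2*l^2)^2 = Real.exp ((2*l) - (2*l)^2) := by
            rw [← Real.exp_nat_mul]; ring_nf
        _ ≤ 1 + 2*l := hx
    calc (Real.sqrt (1 + 2*l))⁻¹ ≤ (Real.exp (l - 2*l^2))⁻¹ := by
          apply inv_anti₀ (Real.exp_pos _) hsqrt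
      _ = Real.exp (-l + 2*l^2) := by rw [← Real.exp_neg]; ring_nf
  -- Chernoff, upper tail
  have up : (μ {ω | (d:ℝ) + ε*s ≤ S ω}).toReal ≤ Real.exp (-(ε^2)/8) := by
    calc (μ {ω | (d:ℝ) + ε*s ≤ S ω}).toReal
        ≤ Real.exp (-l * ((d:ℝ) + ε*s)) * mgf S μ l :=
          measure_ge_le_exp_mul_mgf _ hl0.le (hSint l hl2)
      _ ≤ Real.exp (-l * ((d:ℝ) + ε*s)) * Real.exp ((d:ℝ)*(l + 2*l^2)) := by
          rw [hSmgf l hl2]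
          refine mul_le_mul_of_nonneg_left ?_ (Real.exp_pos _).le
          calc ((Real.sqrt (1 - 2*l))⁻¹)^d ≤ (Real.exp (l + 2*l^2))^d :=
                pow_le_pow_left₀ (by positivity) hb1 d
            _ = Real.exp ((d:ℝ)*(l + 2*l^2)) := by rw [Real.exp_nat_mul]
      _ = Real.exp (-(ε^2)/8) := by
          rw [← Real.exp_add]
          congr 1
          rw [← hsq, hl_def]
          field_simp
          ring
  -- Chernoff, lower tail
  have lo : (μ {ω | S ω ≤ (d:ℝ) - ε*s}).toReal ≤ Real.exp (-(ε^2)/8) := by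
    calc (μ {ω | S ω ≤ (d:ℝ) - ε*s}).toReal
        ≤ Real.exp (-(-l) * ((d:ℝ) - ε*s)) * mgf S μ (-l) :=
          measure_le_le_exp_mul_mgf _ (by linarith) (hSint (-l) (by linarith))
      _ ≤ Real.exp (l * ((d:ℝ) - ε*s)) * Real.exp ((d:ℝ)*(-l + 2*l^2)) := by
          rw [hSmgf (-l) (by linarith), neg_neg, show (1:ℝ) - 2*(-l) = 1 + 2*l by ring]
          refine mul_le_mul_of_nonneg_left ?_ (Real.exp_pos _).le
          calc ((Real.sqrt (1 + 2*l))⁻¹)^d ≤ (Real.exp (-l + 2*l^2))^d :=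
                pow_le_pow_left₀ (by positivity) hb2 d
            _ = Real.exp ((d:ℝ)*(-l + 2*l^2)) := by rw [Real.exp_nat_mul]
      _ = Real.exp (-(ε^2)/8) := by
          rw [← Real.exp_add]
          congr 1
          rw [← hsq, hl_def]
          field_simp
          ring
  -- event inclusion
  have hsub : {ω | ε ≤ |Real.sqrt (∑ i, (X i ω) ^ 2) - s|}
      ⊆ {ω | (d:ℝ) + ε*s ≤ S ω} ∪ {ω | S ω ≤ (d:ℝ) - ε*s} := by
    intro ω hω
    simp only [Set.mem_setOf_eq] at hω
    simp only [Set.mem_union, Set.mem_setOf_eq]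
    have hu0 : 0 ≤ Real.sqrt (∑ i, (X i ω) ^ 2) := Real.sqrt_nonneg _
    have hu2 : Real.sqrt (∑ i, (X i ω) ^ 2)^2 = S ω := by
      rw [hSa ω]; exact Real.sq_sqrt (Finset.sum_nonneg fun i _ => sq_nonneg _)
    exact aux_tail_split hs0 hεpos hε1 hsq hu0 hu2 hω
  -- assemble
  have hA : μ {ω | (d:ℝ) + ε*s ≤ S ω} ≤ ENNReal.ofReal (Real.exp (-(ε^2)/8)) := by
    rw [← ENNReal.ofReal_toReal (measure_ne_top μ _)]
    exact ENNReal.ofReal_le_ofReal up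
  have hB : μ {ω | S ω ≤ (d:ℝ) - ε*s} ≤ ENNReal.ofReal (Real.exp (-(ε^2)/8)) := by
    rw [← ENNReal.ofReal_toReal (measure_ne_top μ _)]
    exact ENNReal.ofReal_le_ofReal lo
  calc μ {ω | ε ≤ |Real.sqrt (∑ i, (X i ω) ^ 2) - s|}
      ≤ μ ({ω | (d:ℝ) + ε*s ≤ S ω} ∪ {ω | S ω ≤ (d:ℝ) - ε*s}) := measure_mono hsub
    _ ≤ μ {ω | (d:ℝ) + ε*s ≤ S ω} + μ {ω | S ω ≤ (d:ℝ) - ε*s} := measure_union_le _ _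
    _ ≤ ENNReal.ofReal (Real.exp (-(ε^2)/8)) + ENNReal.ofReal (Real.exp (-(ε^2)/8)) :=
        add_le_add hA hB
    _ ≤ ENNReal.ofReal (2 * Real.exp (-(ε ^ 2) / 16)) := by
        rw [← ENNReal.ofReal_add (Real.exp_nonneg _) (Real.exp_nonneg _)]
        refine ENNReal.ofReal_le_ofReal ?_
        have h := Real.exp_le_exp.mpr (show -(ε^2)/8 ≤ -(ε^2)/16 by linarith [sq_nonneg ε])
        linarith
end
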